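/- Let Q = ℝ² ∖ {0} and consider T_k*Q with coordinates (x, y, p_x^κ, p_y^κ), the closed one-form θ = 2(x dy − y dx)/(x²+y²) (pulled back from Q), the two-forms Ω_θ^κ = dx∧dp_x^κ + dy∧dp_y^κ − 2((y p_y^κ + x p_x^κ)/(x²+y²)) dx∧dy, and the Hamiltonian H = ½ Σ_{κ=1}^k ((p_x^κ)² + (p_y^κ)²). Then a k-vector field X = (X_1,…,X_k) with X_κ = A_κ ∂_x + B_κ ∂_y + (C_κ)^λ ∂_{p_x^λ} + (D_κ)^λ ∂_{p_y^λ} satisfies the Hamilton–De Donder–Weyl equation Σ_{κ=1}^k ι_{X_κ}Ω_θ^κ = d_θH if and only if A_κ = p_x^κ, B_κ = p_y^κ for all κ, Σ_{κ=1}^k (C_κ)^κ = Σ_{κ=1}^k (y(p_y^κ)² − y(p_x^κ)² + 2x p_x^κ p_y^κ)/(x²+y²), and Σ_{κ=1}^k (D_κ)^κ = Σ_{κ=1}^k (x(p_y^κ)² − x(p_x^κ)² − 2y p_x^κ p_y^κ)/(x²+y²). -/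

import Mathlib

noncomputable section

open scoped BigOperators

/-- Model of `T_k*Q` for `Q = ℝ² ∖ {0}`: points `((x,y), (p_x^κ, p_y^κ))`. -/
abbrev ExModel (k : ℕ) := (ℝ × ℝ) × (Fin k → ℝ × ℝ)

/-- The Lee form `θ = 2(x dy - y dx)/(x²+y²)` pulled back to `T_k*Q`. -/
def exLee (k : ℕ) : ExModel k → ExModel k → ℝ := fun z v =>
  2 * (z.1.1 * v.1.2 - z.1.2 * v.1.1) / (z.1.1 ^ 2 + z.1.2 ^ 2)

/-- The two-forms
`Ω_θ^κ = dx∧dp_x^κ + dy∧dp_y^κ - 2((y p_y^κ + x p_x^κ)/(x²+y²)) dx∧dy`. -/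
def exForm (k : ℕ) (κ : Fin k) : ExModel k → ExModel k → ExModel k → ℝ :=
  fun z u v =>
    (u.1.1 * (v.2 κ).1 - v.1.1 * (u.2 κ).1) +
      (u.1.2 * (v.2 κ).2 - v.1.2 * (u.2 κ).2) -
      2 * ((z.1.2 * (z.2 κ).2 + z.1.1 * (z.2 κ).1) / (z.1.1 ^ 2 + z.1.2 ^ 2)) *
        (u.1.1 * v.1.2 - u.1.2 * v.1.1)

/-- The quadratic Hamiltonian `H = ½ Σ_κ ((p_x^κ)² + (p_y^κ)²)`. -/
def exHam (k : ℕ) : ExModel k → ℝ := fun z =>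
  (1 / 2) * ∑ κ, ((z.2 κ).1 ^ 2 + (z.2 κ).2 ^ 2)

def pxL (k : ℕ) (κ : Fin k) : ExModel k →L[ℝ] ℝ :=
  (ContinuousLinearMap.fst ℝ ℝ ℝ).comp
    ((ContinuousLinearMap.proj κ).comp (ContinuousLinearMap.snd ℝ (ℝ × ℝ) (Fin k → ℝ × ℝ)))

def pyL (k : ℕ) (κ : Fin k) : ExModel k →L[ℝ] ℝ :=
  (ContinuousLinearMap.snd ℝ ℝ ℝ).comp
    ((ContinuousLinearMap.proj κ).comp (ContinuousLinearMap.snd ℝ (ℝ × ℝ) (Fin k → ℝ × ℝ)))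

@[simp] lemma pxL_apply (k : ℕ) (κ : Fin k) (w : ExModel k) : pxL k κ w = (w.2 κ).1 := rfl
@[simp] lemma pyL_apply (k : ℕ) (κ : Fin k) (w : ExModel k) : pyL k κ w = (w.2 κ).2 := rfl

lemma exHam_fderiv (k : ℕ) (z v : ExModel k) :
    fderiv ℝ (exHam k) z v = ∑ κ, ((z.2 κ).1 * (v.2 κ).1 + (z.2 κ).2 * (v.2 κ).2) := by
  have hsum : HasFDerivAt (exHam k)
      ((1 / 2 : ℝ) • ∑ κ : Fin k,
        (((z.2 κ).1 • pxL k κ + (z.2 κ).1 • pxL k κ) +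
          ((z.2 κ).2 • pyL k κ + (z.2 κ).2 • pyL k κ))) z := by
    have h := (HasFDerivAt.fun_sum (fun κ (_ : κ ∈ Finset.univ) =>
      ((((pxL k κ).hasFDerivAt (x := z)).mul ((pxL k κ).hasFDerivAt (x := z))).add
        (((pyL k κ).hasFDerivAt (x := z)).mul ((pyL k κ).hasFDerivAt (x := z)))))).const_mul
        (1 / 2 : ℝ)
    simp only [exHam, ← pow_two, pxL_apply, pyL_apply, Pi.add_apply, Pi.mul_apply, Pi.pow_apply] at h
    exact h
  rw [hsum.fderiv]
  simp only [ContinuousLinearMap.smul_apply, ContinuousLinearMap.sum_apply,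
    ContinuousLinearMap.add_apply, pxL_apply, pyL_apply, smul_eq_mul, Finset.mul_sum]
  exact Finset.sum_congr rfl fun κ _ => by ring

/-- On `T_k*(ℝ² ∖ {0})` with the locally conformal `k`-symplectic
forms `Ω_θ^κ` and Hamiltonian `H = ½ Σ_κ ((p_x^κ)² + (p_y^κ)²)`, a `k`-vector field
`X_κ = A_κ ∂_x + B_κ ∂_y + (C_κ)^λ ∂_{p_x^λ} + (D_κ)^λ ∂_{p_y^λ}` satisfies the
Hamilton–De Donder–Weyl equation `Σ_κ ι_{X_κ}Ω_θ^κ = d_θH = dH - Hθ` iff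
`A_κ = p_x^κ`, `B_κ = p_y^κ` for all `κ`,
`Σ_κ (C_κ)^κ = Σ_κ (y(p_y^κ)² - y(p_x^κ)² + 2x p_x^κ p_y^κ)/(x²+y²)` and
`Σ_κ (D_κ)^κ = Σ_κ (x(p_y^κ)² - x(p_x^κ)² - 2y p_x^κ p_y^κ)/(x²+y²)`. -/
theorem example_hdw_punctured_plane (k : ℕ)
    (X : Fin k → ExModel k → ExModel k) :
    ∀ z : ExModel k, z.1 ≠ 0 →
      ((∀ v, ∑ κ, exForm k κ z (X κ z) v =
          fderiv ℝ (exHam k) z v - exHam k z * exLee k z v) ↔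
        ((∀ κ : Fin k,
            (X κ z).1.1 = (z.2 κ).1 ∧ (X κ z).1.2 = (z.2 κ).2) ∧
          (∑ κ, ((X κ z).2 κ).1 =
            ∑ κ, (z.1.2 * (z.2 κ).2 ^ 2 - z.1.2 * (z.2 κ).1 ^ 2 +
              2 * z.1.1 * (z.2 κ).1 * (z.2 κ).2) / (z.1.1 ^ 2 + z.1.2 ^ 2)) ∧
          (∑ κ, ((X κ z).2 κ).2 =
            ∑ κ, (z.1.1 * (z.2 κ).2 ^ 2 - z.1.1 * (z.2 κ).1 ^ 2 -
              2 * z.1.2 * (z.2 κ).1 * (z.2 κ).2) / (z.1.1 ^ 2 + z.1.2 ^ 2)))) := by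
  intro z hz
  have hxy : z.1.1 ≠ 0 ∨ z.1.2 ≠ 0 := by
    by_contra h
    push_neg at h
    exact hz (Prod.ext h.1 h.2)
  have hr : z.1.1 ^ 2 + z.1.2 ^ 2 ≠ 0 := by
    rcases hxy with h | h
    · positivity
    · positivity
  constructor
  · intro heq
    have hA : ∀ μ : Fin k, (X μ z).1.1 = (z.2 μ).1 := by
      intro μ
      have h := heq ((0, 0), Pi.single μ ((1 : ℝ), (0 : ℝ)))
      simp only [exForm, exLee, exHam_fderiv, exHam, Pi.single_apply, apply_ite Prod.fst,
        apply_ite Prod.snd, Prod.fst_zero, Prod.snd_zero, mul_ite, mul_one, mul_zero,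
        mul_comm, sub_zero, zero_mul, zero_sub, sub_self, add_zero, zero_add, neg_zero,
        Finset.sum_ite_eq', Finset.mem_univ, if_true] at h
      simpa using h
    have hB : ∀ μ : Fin k, (X μ z).1.2 = (z.2 μ).2 := by
      intro μ
      have h := heq ((0, 0), Pi.single μ ((0 : ℝ), (1 : ℝ)))
      simp only [exForm, exLee, exHam_fderiv, exHam, Pi.single_apply, apply_ite Prod.fst,
        apply_ite Prod.snd, Prod.fst_zero, Prod.snd_zero, mul_ite, mul_one, mul_zero,
        mul_comm, sub_zero, zero_mul, zero_sub, sub_self, add_zero, zero_add, neg_zero,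
        Finset.sum_ite_eq', Finset.mem_univ, if_true] at h
      simpa using h
    refine ⟨fun κ => ⟨hA κ, hB κ⟩, ?_, ?_⟩
    · have h := heq (((1 : ℝ), (0 : ℝ)), fun _ => ((0 : ℝ), (0 : ℝ)))
      simp only [exForm, exLee, exHam_fderiv, exHam, mul_zero, mul_one, zero_mul,
        sub_zero, zero_sub, add_zero, zero_add, sub_self, hB] at h
      have h2 : -∑ κ : Fin k, ((X κ z).2 κ).1 +
          ∑ κ : Fin k, 2 * ((z.1.2 * (z.2 κ).2 + z.1.1 * (z.2 κ).1) /
              (z.1.1 ^ 2 + z.1.2 ^ 2)) * (z.2 κ).2 =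
          ∑ x : Fin k, (0 : ℝ) - (1 / 2 * ∑ κ : Fin k, ((z.2 κ).1 ^ 2 + (z.2 κ).2 ^ 2)) *
            (2 * -z.1.2 / (z.1.1 ^ 2 + z.1.2 ^ 2)) := by
        rw [← Finset.sum_neg_distrib, ← Finset.sum_add_distrib, ← h]
        exact Finset.sum_congr rfl fun κ _ => by ring
      rw [Finset.sum_const_zero, zero_sub] at h2
      have h3 : ∑ κ : Fin k, ((X κ z).2 κ).1 =
          ∑ κ : Fin k, 2 * ((z.1.2 * (z.2 κ).2 + z.1.1 * (z.2 κ).1) /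
              (z.1.1 ^ 2 + z.1.2 ^ 2)) * (z.2 κ).2 +
          (1 / 2 * ∑ κ : Fin k, ((z.2 κ).1 ^ 2 + (z.2 κ).2 ^ 2)) *
            (2 * -z.1.2 / (z.1.1 ^ 2 + z.1.2 ^ 2)) := by linarith
      rw [h3, mul_assoc, Finset.sum_mul, Finset.mul_sum, ← Finset.sum_add_distrib]
      refine Finset.sum_congr rfl fun κ _ => ?_
      field_simp
      ring
    · have h := heq (((0 : ℝ), (1 : ℝ)), fun _ => ((0 : ℝ), (0 : ℝ)))
      simp only [exForm, exLee, exHam_fderiv, exHam, mul_zero, mul_one, zero_mul,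
        sub_zero, zero_sub, add_zero, zero_add, sub_self, hA] at h
      have h2 : -∑ κ : Fin k, ((X κ z).2 κ).2 +
          ∑ κ : Fin k, -(2 * ((z.1.2 * (z.2 κ).2 + z.1.1 * (z.2 κ).1) /
              (z.1.1 ^ 2 + z.1.2 ^ 2)) * (z.2 κ).1) =
          ∑ x : Fin k, (0 : ℝ) - (1 / 2 * ∑ κ : Fin k, ((z.2 κ).1 ^ 2 + (z.2 κ).2 ^ 2)) *
            (2 * z.1.1 / (z.1.1 ^ 2 + z.1.2 ^ 2)) := by
        rw [← Finset.sum_neg_distrib, ← Finset.sum_add_distrib, ← h]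
        exact Finset.sum_congr rfl fun κ _ => by ring
      rw [Finset.sum_const_zero, zero_sub] at h2
      have h3 : ∑ κ : Fin k, ((X κ z).2 κ).2 =
          ∑ κ : Fin k, -(2 * ((z.1.2 * (z.2 κ).2 + z.1.1 * (z.2 κ).1) /
              (z.1.1 ^ 2 + z.1.2 ^ 2)) * (z.2 κ).1) +
          (1 / 2 * ∑ κ : Fin k, ((z.2 κ).1 ^ 2 + (z.2 κ).2 ^ 2)) *
            (2 * z.1.1 / (z.1.1 ^ 2 + z.1.2 ^ 2)) := by linarith
      rw [h3, mul_assoc, Finset.sum_mul, Finset.mul_sum, ← Finset.sum_add_distrib]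
      refine Finset.sum_congr rfl fun κ _ => ?_
      field_simp
      ring
  · rintro ⟨hAB, hC, hD⟩ v
    rw [exHam_fderiv]
    have expand : ∑ κ, exForm k κ z (X κ z) v =
        ∑ κ, ((z.2 κ).1 * (v.2 κ).1 + (z.2 κ).2 * (v.2 κ).2
          - 2 * ((z.1.2 * (z.2 κ).2 + z.1.1 * (z.2 κ).1) / (z.1.1 ^ 2 + z.1.2 ^ 2)) *
            ((z.2 κ).1 * v.1.2 - (z.2 κ).2 * v.1.1))
        - v.1.1 * ∑ κ, ((X κ z).2 κ).1 - v.1.2 * ∑ κ, ((X κ z).2 κ).2 := by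
      rw [Finset.mul_sum, Finset.mul_sum, sub_sub, ← Finset.sum_add_distrib,
        ← Finset.sum_sub_distrib]
      refine Finset.sum_congr rfl fun κ _ => ?_
      rw [exForm, (hAB κ).1, (hAB κ).2]
      ring
    rw [expand, hC, hD, exHam, exLee]
    rw [Finset.mul_sum, Finset.mul_sum, sub_sub, ← Finset.sum_add_distrib,
      ← Finset.sum_sub_distrib]
    rw [mul_assoc, Finset.sum_mul, Finset.mul_sum, ← Finset.sum_sub_distrib]
    refine Finset.sum_congr rfl fun κ _ => ?_
    field_simp
    ring
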